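/- For the torus C_m □ C_n with m, n ≥ 4 both odd and k = 2, fμ²(C_m □ C_n) = 2. -/

import Mathlib

open SimpleGraph

variable {V : Type*}

/-- `X` is a `k`-fault-tolerant mutual-visibility set of `G`: for any two distinct
non-adjacent vertices `u v ∈ X` there are `k+1` internally disjoint shortest
`u,v`-paths whose only vertices in `X` are `u` and `v`. -/
def IsFtmvSet (G : SimpleGraph V) (k : ℕ) (X : Set V) : Prop :=
  ∀ u ∈ X, ∀ v ∈ X, u ≠ v → ¬ G.Adj u v →
    ∃ P : Fin (k + 1) → G.Path u v,
      (∀ i, (P i).1.length = G.dist u v) ∧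
      (∀ i, ∀ w ∈ (P i).1.support, w ∈ X → w = u ∨ w = v) ∧
      (∀ i j, i ≠ j → ∀ w, w ∈ (P i).1.support → w ∈ (P j).1.support → w = u ∨ w = v)

/-- The `k`-fault-tolerant mutual-visibility number: maximum cardinality of a `k`-ftmv set. -/
noncomputable def ftmvNum (G : SimpleGraph V) (k : ℕ) : ℕ :=
  sSup {n | ∃ X : Set V, IsFtmvSet G k X ∧ X.ncard = n}

/-- The clique number of `G`. -/
noncomputable def cliqueNum' (G : SimpleGraph V) : ℕ :=
  sSup {n | ∃ s : Finset V, G.IsNClique n s}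


section Cyc
open Fin.CommRing
variable {n : ℕ} [NeZero n]

lemma myval_one (hn : 2 ≤ n) : (1 : Fin n).val = 1 := by
  rw [Fin.val_one']; exact Nat.mod_eq_of_lt (by omega)

lemma mycyc_conn (hn : 1 ≤ n) : (cycleGraph n).Connected := by
  obtain ⟨n', rfl⟩ : ∃ n', n = n' + 1 := ⟨n - 1, by omega⟩
  exact cycleGraph_connected

lemma mycyc_adj_succ (hn : 2 ≤ n) (x : Fin n) : (cycleGraph n).Adj x (x + 1) := by
  rw [cycleGraph_adj']
  right
  rw [add_sub_cancel_left, myval_one hn]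

lemma mycyc_nbr (hn : 2 ≤ n) {a b : Fin n} (h : (cycleGraph n).Adj a b) :
    b = a + 1 ∨ b = a - 1 := by
  rw [cycleGraph_adj'] at h
  rcases h with h | h
  · right
    have : a - b = 1 := by
      have := myval_one (n := n) hn
      exact Fin.val_injective (by omega)
    rw [← this]; ring
  · left
    have : b - a = 1 := by
      have := myval_one (n := n) hn
      exact Fin.val_injective (by omega)
    rw [← this]; ring

/-- distance function on the cycle in terms of `val`. -/
def cf (n t : ℕ) : ℕ := min t (n - t)

lemma cf_step_up (hn : 2 ≤ n) (y : Fin n) : cf n (y + 1).val ≤ cf n y.val + 1 := by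
  have h1 : (y + 1).val = (y.val + 1) % n := by rw [Fin.val_add, myval_one hn]
  have h2 := y.isLt
  rcases Nat.lt_or_ge (y.val + 1) n with h | h
  · rw [Nat.mod_eq_of_lt h] at h1
    unfold cf; omega
  · have : y.val + 1 = n := by omega
    rw [this, Nat.mod_self] at h1
    unfold cf; omega

lemma cf_step_down (hn : 2 ≤ n) (y : Fin n) : cf n (y - 1).val ≤ cf n y.val + 1 := by
  have h1 : (y - 1).val = (n - 1 + y.val) % n := by
    rw [Fin.sub_def, myval_one hn]
  have h2 := y.isLt
  rcases Nat.eq_or_lt_of_le (Nat.zero_le y.val) with h | h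
  · rw [← h] at h1 ⊢
    rw [Nat.add_zero, Nat.mod_eq_of_lt (by omega)] at h1
    unfold cf; omega
  · have hlt : n ≤ n - 1 + y.val := by omega
    rw [Nat.mod_eq_sub_mod hlt, Nat.mod_eq_of_lt (by omega)] at h1
    unfold cf; omega

lemma mycyc_walk_ge (hn : 2 ≤ n) (c : Fin n) :
    ∀ {a : Fin n} (w : (cycleGraph n).Walk a c), cf n (c - a).val ≤ w.length := by
  intro a w
  induction w with
  | nil => simp [cf]
  | @cons a b c h q ih =>
    rw [Walk.length_cons]
    have hb : b = a + 1 ∨ b = a - 1 := mycyc_nbr hn h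
    have key : cf n (c - a).val ≤ cf n (c - b).val + 1 := by
      rcases hb with rfl | rfl
      · have : c - a = (c - (a + 1)) + 1 := by ring
        rw [this]
        exact cf_step_up hn _
      · have : c - a = (c - (a - 1)) - 1 := by ring
        rw [this]
        exact cf_step_down hn _
    omega

lemma mycyc_dist_le_val (hn : 2 ≤ n) (a c : Fin n) :
    (cycleGraph n).dist a c ≤ (c - a).val := by
  have key : ∀ k : ℕ, (cycleGraph n).dist a (a + (k : Fin n)) ≤ k := by
    intro k
    induction k with
    | zero => simp
    | succ k ih =>
      have hcast : ((k + 1 : ℕ) : Fin n) = (k : Fin n) + 1 := by push_cast; ring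
      rw [hcast, ← add_assoc]
      calc (cycleGraph n).dist a (a + (k : Fin n) + 1)
          ≤ (cycleGraph n).dist a (a + (k : Fin n)) +
            (cycleGraph n).dist (a + (k : Fin n)) (a + (k : Fin n) + 1) :=
            (mycyc_conn (by omega)).dist_triangle
        _ ≤ k + 1 := by
            have h1 : (cycleGraph n).dist (a + (k : Fin n)) (a + (k : Fin n) + 1) ≤ 1 :=
              dist_le (Walk.cons (mycyc_adj_succ hn _) Walk.nil)
            omega
  have := key (c - a).val
  rwa [Fin.cast_val_eq_self, add_sub_cancel] at this

lemma mycyc_dist (hn : 2 ≤ n) (a c : Fin n) :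
    (cycleGraph n).dist a c = cf n (c - a).val := by
  apply le_antisymm
  · rcases eq_or_ne a c with rfl | hne
    · simp [cf]
    · have h1 : (cycleGraph n).dist a c ≤ (c - a).val := mycyc_dist_le_val hn a c
      have h2 : (cycleGraph n).dist a c ≤ (a - c).val := by
        rw [SimpleGraph.dist_comm]; exact mycyc_dist_le_val hn c a
      have h3 : (a - c) = -(c - a) := by ring
      have h4 : (c - a) ≠ 0 := sub_ne_zero_of_ne (Ne.symm hne)
      have h5 : (a - c).val = n - (c - a).val := by
        have hlt := (c - a).isLt
        have hne0 : (c - a).val ≠ 0 := fun h => h4 (Fin.ext (by rw [h, Fin.val_zero]))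
        rw [h3, Fin.neg_def]
        exact Nat.mod_eq_of_lt (by omega)
      unfold cf; omega
  · obtain ⟨w, hw⟩ := ((mycyc_conn (n := n) (by omega)).exists_walk_length_eq_dist a c)
    rw [← hw]
    exact mycyc_walk_ge hn c w


lemma mycyc_no_two_closer (hn : 5 ≤ n) (hodd : n % 2 = 1) (a c : Fin n) :
    ¬((cycleGraph n).dist (a + 1) c < (cycleGraph n).dist a c ∧
      (cycleGraph n).dist (a - 1) c < (cycleGraph n).dist a c) := by
  have hn2 : 2 ≤ n := by omega
  rintro ⟨h1, h2⟩
  rw [mycyc_dist hn2, mycyc_dist hn2] at h1 h2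
  have e1 : c - (a + 1) = (c - a) - 1 := by ring
  have e2 : c - (a - 1) = (c - a) + 1 := by ring
  rw [e1] at h1
  rw [e2] at h2
  set y := c - a with hy
  have hyl := y.isLt
  have H1 : (y + 1).val = y.val + 1 ∨ ((y + 1).val = 0 ∧ y.val + 1 = n) := by
    have hv1 : (y + 1).val = (y.val + 1) % n := by rw [Fin.val_add, myval_one hn2]
    rcases Nat.lt_or_ge (y.val + 1) n with h | h
    · left; rw [hv1]; exact Nat.mod_eq_of_lt h
    · right
      have hh : y.val + 1 = n := by omega
      refine ⟨?_, hh⟩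
      rw [hv1, hh, Nat.mod_self]
  have H2 : (y - 1).val = y.val - 1 ∨ ((y - 1).val = n - 1 ∧ y.val = 0) := by
    have hv2 : (y - 1).val = (n - 1 + y.val) % n := by
      rw [Fin.sub_def, myval_one hn2]
    rcases Nat.eq_or_lt_of_le (Nat.zero_le y.val) with h0 | h0
    · right
      refine ⟨?_, h0.symm⟩
      rw [hv2, ← h0, Nat.add_zero, Nat.mod_eq_of_lt (by omega)]
    · left
      rw [hv2, Nat.mod_eq_sub_mod (by omega), Nat.mod_eq_of_lt (by omega)]
      omega
  unfold cf at h1 h2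
  rcases H1 with h | h <;> rcases H2 with h' | h' <;> omega

lemma mycyc_closer_unique (hn : 5 ≤ n) (hodd : n % 2 = 1) {a c a₁ a₂ : Fin n}
    (h1 : (cycleGraph n).Adj a a₁) (h2 : (cycleGraph n).Adj a a₂)
    (hd1 : (cycleGraph n).dist a₁ c < (cycleGraph n).dist a c)
    (hd2 : (cycleGraph n).dist a₂ c < (cycleGraph n).dist a c) : a₁ = a₂ := by
  have hn2 : 2 ≤ n := by omega
  rcases mycyc_nbr hn2 h1 with rfl | rfl <;> rcases mycyc_nbr hn2 h2 with rfl | rfl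
  · rfl
  · exact absurd ⟨hd1, hd2⟩ (mycyc_no_two_closer hn hodd a c)
  · exact absurd ⟨hd2, hd1⟩ (mycyc_no_two_closer hn hodd a c)
  · rfl

lemma mycyc_no_triangle (hn : 4 ≤ n) {x y z : Fin n}
    (hxy : (cycleGraph n).Adj x y) (hyz : (cycleGraph n).Adj y z)
    (hxz : (cycleGraph n).Adj x z) : False := by
  have hn2 : 2 ≤ n := by omega
  have hv1 : (1 : Fin n).val = 1 := myval_one hn2
  have hv2 : (1 + 1 : Fin n).val = 2 := by
    rw [Fin.val_add, hv1]; exact Nat.mod_eq_of_lt (by omega)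
  have hv3 : (1 + 1 + 1 : Fin n).val = 3 := by
    rw [Fin.val_add, hv2, hv1]; exact Nat.mod_eq_of_lt (by omega)
  have c21 : (1 + 1 : Fin n) ≠ 1 := by
    intro h; rw [Fin.ext_iff, hv1, hv2] at h; omega
  have c30 : (1 + 1 + 1 : Fin n) ≠ 0 := by
    intro h; rw [Fin.ext_iff, hv3, Fin.val_zero] at h; omega
  rcases mycyc_nbr hn2 hxy with rfl | rfl <;> rcases mycyc_nbr hn2 hyz with rfl | rfl
  · rcases mycyc_nbr hn2 hxz with he | he
    · exact c21 (by linear_combination he)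
    · exact c30 (by linear_combination he)
  · exact hxz.ne (by ring)
  · exact hxz.ne (by ring)
  · rcases mycyc_nbr hn2 hxz with he | he
    · exact c30 (by linear_combination -he)
    · exact c21 (by linear_combination -he)

end Cyc

section Box
variable {α β : Type*} {G : SimpleGraph α} {H : SimpleGraph β}

lemma mybox_walk_ge (hG : G.Connected) (hH : H.Connected) {x y : α × β}
    (w : (G □ H).Walk x y) : G.dist x.1 y.1 + H.dist x.2 y.2 ≤ w.length := by
  induction w with
  | nil => simp
  | @cons x z y h q ih =>
    rw [Walk.length_cons]
    rcases boxProd_adj.mp h with ⟨ha, hb⟩ | ⟨ha, hb⟩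
    · have h1 : G.dist x.1 y.1 ≤ G.dist z.1 y.1 + 1 := by
        calc G.dist x.1 y.1 ≤ G.dist x.1 z.1 + G.dist z.1 y.1 := hG.dist_triangle
          _ ≤ 1 + G.dist z.1 y.1 := by
              have hle : G.dist x.1 z.1 ≤ 1 := by
                simpa using dist_le (Walk.cons ha Walk.nil)
              omega
          _ = G.dist z.1 y.1 + 1 := by omega
      rw [hb]
      omega
    · have h1 : H.dist x.2 y.2 ≤ H.dist z.2 y.2 + 1 := by
        calc H.dist x.2 y.2 ≤ H.dist x.2 z.2 + H.dist z.2 y.2 := hH.dist_triangle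
          _ ≤ 1 + H.dist z.2 y.2 := by
              have hle : H.dist x.2 z.2 ≤ 1 := by
                simpa using dist_le (Walk.cons ha Walk.nil)
              omega
          _ = H.dist z.2 y.2 + 1 := by omega
      rw [hb]
      omega

lemma mybox_dist (hG : G.Connected) (hH : H.Connected) (x y : α × β) :
    (G □ H).dist x y = G.dist x.1 y.1 + H.dist x.2 y.2 := by
  apply le_antisymm
  · obtain ⟨w1, hw1⟩ := hG.exists_walk_length_eq_dist x.1 y.1
    obtain ⟨w2, hw2⟩ := hH.exists_walk_length_eq_dist x.2 y.2
    have hwalk : ((w1.boxProdLeft H x.2).append (w2.boxProdRight G y.1)).length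
        = G.dist x.1 y.1 + H.dist x.2 y.2 := by
      rw [Walk.length_append]
      simp only [Walk.boxProdLeft, Walk.boxProdRight]
      exact (congrArg₂ (· + ·) (Walk.length_map _ w1) (Walk.length_map _ w2)).trans (by rw [hw1, hw2])
    calc (G □ H).dist x y = (G □ H).dist (x.1, x.2) (y.1, y.2) := by simp
      _ ≤ _ := dist_le ((w1.boxProdLeft H x.2).append (w2.boxProdRight G y.1))
      _ = _ := hwalk
  · obtain ⟨w, hw⟩ := (hG.boxProd hH).exists_walk_length_eq_dist x y
    rw [← hw]
    exact mybox_walk_ge hG hH w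

end Box

section Gen
variable {V : Type*} {G : SimpleGraph V}

lemma my_second_vertex (hconn : G.Connected) {u v : V} (p : G.Walk u v)
    (hl : p.length = G.dist u v) (hpos : 0 < p.length) :
    G.Adj u (p.getVert 1) ∧ p.getVert 1 ∈ p.support ∧
      G.dist (p.getVert 1) v + 1 = G.dist u v := by
  cases p with
  | nil => simp at hpos
  | @cons _ b _ h q =>
    have hgv : (Walk.cons h q).getVert 1 = b := by
      rw [Walk.getVert_cons_succ, Walk.getVert_zero]
    rw [hgv]
    refine ⟨h, ?_, ?_⟩
    · rw [Walk.support_cons]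
      exact List.mem_cons_of_mem _ q.start_mem_support
    · have h1 : G.dist b v ≤ q.length := dist_le q
      have h2 : G.dist u v ≤ G.dist u b + G.dist b v := hconn.dist_triangle
      have h3 : G.dist u b ≤ 1 := by simpa using dist_le (Walk.cons h Walk.nil)
      have h4 : (Walk.cons h q).length = q.length + 1 := Walk.length_cons h q
      omega

end Gen

section Torus
variable {m n : ℕ} [NeZero m] [NeZero n]

lemma torus_conn (hm : 1 ≤ m) (hn : 1 ≤ n) :
    (cycleGraph m □ cycleGraph n).Connected :=
  (mycyc_conn hm).boxProd (mycyc_conn hn)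

lemma torus_no_triangle (hm : 4 ≤ m) (hn : 4 ≤ n) {p q r : Fin m × Fin n}
    (hpq : (cycleGraph m □ cycleGraph n).Adj p q)
    (hqr : (cycleGraph m □ cycleGraph n).Adj q r)
    (hpr : (cycleGraph m □ cycleGraph n).Adj p r) : False := by
  rcases boxProd_adj.mp hpq with ⟨h1, e1⟩ | ⟨h1, e1⟩ <;>
    rcases boxProd_adj.mp hqr with ⟨h2, e2⟩ | ⟨h2, e2⟩ <;>
    rcases boxProd_adj.mp hpr with ⟨h3, e3⟩ | ⟨h3, e3⟩
  · exact mycyc_no_triangle hm h1 h2 h3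
  · exact h3.ne (e1.trans e2)
  · exact h2.ne (e1.symm.trans e3)
  · exact h1.ne (e3.trans e2.symm)
  · exact h1.ne (e3.trans e2.symm)
  · exact h2.ne (e1.symm.trans e3)
  · exact h3.ne (e1.trans e2)
  · exact mycyc_no_triangle hn h1 h2 h3

lemma torus_no_three_closer (hm : 5 ≤ m) (hn : 5 ≤ n)
    (hmo : m % 2 = 1) (hno : n % 2 = 1) {u v : Fin m × Fin n}
    (w : Fin 3 → Fin m × Fin n)
    (hadj : ∀ i, (cycleGraph m □ cycleGraph n).Adj u (w i))
    (hcl : ∀ i, (cycleGraph m □ cycleGraph n).dist (w i) v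
      < (cycleGraph m □ cycleGraph n).dist u v)
    (hne : ∀ i j, i ≠ j → w i ≠ w j) : False := by
  have hconn1 : (cycleGraph m).Connected := mycyc_conn (by omega)
  have hconn2 : (cycleGraph n).Connected := mycyc_conn (by omega)
  have hdist : ∀ x y : Fin m × Fin n, (cycleGraph m □ cycleGraph n).dist x y
      = (cycleGraph m).dist x.1 y.1 + (cycleGraph n).dist x.2 y.2 :=
    mybox_dist hconn1 hconn2
  -- classify each i
  have hclass : ∀ i, ((cycleGraph m).Adj u.1 (w i).1 ∧ (w i).2 = u.2 ∧
        (cycleGraph m).dist (w i).1 v.1 < (cycleGraph m).dist u.1 v.1) ∨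
      ((cycleGraph n).Adj u.2 (w i).2 ∧ (w i).1 = u.1 ∧
        (cycleGraph n).dist (w i).2 v.2 < (cycleGraph n).dist u.2 v.2) := by
    intro i
    have hc := hcl i
    rw [hdist, hdist] at hc
    rcases boxProd_adj.mp (hadj i) with ⟨h1, e1⟩ | ⟨h1, e1⟩
    · left
      refine ⟨h1, e1.symm, ?_⟩
      rw [e1.symm] at hc
      omega
    · right
      refine ⟨h1, e1.symm, ?_⟩
      rw [e1.symm] at hc
      omega
  -- two indices in the same class coincide
  have same1 : ∀ i j, ((cycleGraph m).Adj u.1 (w i).1 ∧ (w i).2 = u.2 ∧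
        (cycleGraph m).dist (w i).1 v.1 < (cycleGraph m).dist u.1 v.1) →
      ((cycleGraph m).Adj u.1 (w j).1 ∧ (w j).2 = u.2 ∧
        (cycleGraph m).dist (w j).1 v.1 < (cycleGraph m).dist u.1 v.1) →
      w i = w j := by
    rintro i j ⟨a1, b1, c1⟩ ⟨a2, b2, c2⟩
    have := mycyc_closer_unique hm hmo a1 a2 c1 c2
    exact Prod.ext this (b1.trans b2.symm)
  have same2 : ∀ i j, ((cycleGraph n).Adj u.2 (w i).2 ∧ (w i).1 = u.1 ∧
        (cycleGraph n).dist (w i).2 v.2 < (cycleGraph n).dist u.2 v.2) →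
      ((cycleGraph n).Adj u.2 (w j).2 ∧ (w j).1 = u.1 ∧
        (cycleGraph n).dist (w j).2 v.2 < (cycleGraph n).dist u.2 v.2) →
      w i = w j := by
    rintro i j ⟨a1, b1, c1⟩ ⟨a2, b2, c2⟩
    have := mycyc_closer_unique hn hno a1 a2 c1 c2
    exact Prod.ext (b1.trans b2.symm) this
  rcases hclass 0 with h0 | h0 <;> rcases hclass 1 with h1 | h1 <;>
    rcases hclass 2 with h2 | h2
  · exact hne 0 1 (by decide) (same1 0 1 h0 h1)
  · exact hne 0 1 (by decide) (same1 0 1 h0 h1)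
  · exact hne 0 2 (by decide) (same1 0 2 h0 h2)
  · exact hne 1 2 (by decide) (same2 1 2 h1 h2)
  · exact hne 1 2 (by decide) (same1 1 2 h1 h2)
  · exact hne 0 2 (by decide) (same2 0 2 h0 h2)
  · exact hne 0 1 (by decide) (same2 0 1 h0 h1)
  · exact hne 0 1 (by decide) (same2 0 1 h0 h1)

end Torus

section Final
variable {m n : ℕ} [NeZero m] [NeZero n]

lemma torus_ftmv_le (hm : 5 ≤ m) (hn : 5 ≤ n) (hmo : m % 2 = 1) (hno : n % 2 = 1)
    (X : Set (Fin m × Fin n)) (hX : IsFtmvSet (cycleGraph m □ cycleGraph n) 2 X) :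
    X.ncard ≤ 2 := by
  set T := cycleGraph m □ cycleGraph n with hT
  have hconn : T.Connected := torus_conn (by omega) (by omega)
  have hadjall : ∀ u ∈ X, ∀ v ∈ X, u ≠ v → T.Adj u v := by
    intro u hu v hv huv
    by_contra hnadj
    obtain ⟨P, hlen, hmem, hdisj⟩ := hX u hu v hv huv hnadj
    have hd0 : T.dist u v ≠ 0 := by
      have := hconn.pos_dist_of_ne huv; omega
    have hd1 : T.dist u v ≠ 1 := fun h => hnadj (dist_eq_one_iff_adj.mp h)
    set w : Fin 3 → Fin m × Fin n := fun i => (P i).1.getVert 1 with hw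
    have hsv : ∀ i, T.Adj u (w i) ∧ (w i) ∈ (P i).1.support ∧
        T.dist (w i) v + 1 = T.dist u v := fun i =>
      my_second_vertex hconn (P i).1 (hlen i) (by rw [hlen i]; omega)
    have hwnu : ∀ i, w i ≠ u := fun i h => ((hsv i).1.ne (by rw [h])).elim
    have hwnv : ∀ i, w i ≠ v := by
      intro i h
      have h2 := (hsv i).2.2
      rw [h, dist_self] at h2
      omega
    refine torus_no_three_closer (u := u) (v := v) hm hn hmo hno w (fun i => (hsv i).1)
      (fun i => by rw [← hT]; have := (hsv i).2.2; omega) ?_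
    intro i j hij heq
    have hmemj : w i ∈ (P j).1.support := by rw [heq]; exact (hsv j).2.1
    rcases hdisj i j hij (w i) (hsv i).2.1 hmemj with h | h
    · exact hwnu i h
    · exact hwnv i h
  by_contra hcard
  push_neg at hcard
  obtain ⟨a, ha, b, hb, c, hc, hab, hac, hbc⟩ := (Set.two_lt_ncard X.toFinite).mp hcard
  exact torus_no_triangle (by omega) (by omega) (hadjall a ha b hb hab)
    (hadjall b hb c hc hbc) (hadjall a ha c hc hac)

end Final

theorem stmt19 (m n : ℕ) (hm : 4 ≤ m) (hn : 4 ≤ n) (hmo : Odd m) (hno : Odd n) :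
    ftmvNum (cycleGraph m □ cycleGraph n) 2 = 2 := by
  haveI : NeZero m := ⟨by omega⟩
  haveI : NeZero n := ⟨by omega⟩
  have hmo' : m % 2 = 1 := Nat.odd_iff.mp hmo
  have hno' : n % 2 = 1 := Nat.odd_iff.mp hno
  have hm5 : 5 ≤ m := by omega
  have hn5 : 5 ≤ n := by omega
  have hub : ∀ k ∈ {k | ∃ X : Set (Fin m × Fin n),
      IsFtmvSet (cycleGraph m □ cycleGraph n) 2 X ∧ X.ncard = k}, k ≤ 2 := by
    rintro k ⟨X, hX, rfl⟩
    exact torus_ftmv_le hm5 hn5 hmo' hno' X hX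
  have h01 : ((0 : Fin m), (0 : Fin n)) ≠ ((0 : Fin m), (1 : Fin n)) := by
    intro h
    have h2 := congrArg (fun p => p.2.val) h
    simp only [Fin.val_zero] at h2
    rw [myval_one (by omega)] at h2
    omega
  have hadj : (cycleGraph m □ cycleGraph n).Adj ((0 : Fin m), (0 : Fin n))
      ((0 : Fin m), (1 : Fin n)) := by
    apply boxProd_adj.mpr
    right
    refine ⟨?_, rfl⟩
    have := mycyc_adj_succ (n := n) (by omega) 0
    simpa using this
  have h2mem : 2 ∈ {k | ∃ X : Set (Fin m × Fin n),
      IsFtmvSet (cycleGraph m □ cycleGraph n) 2 X ∧ X.ncard = k} := by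
    refine ⟨{((0 : Fin m), (0 : Fin n)), ((0 : Fin m), (1 : Fin n))}, ?_, Set.ncard_pair h01⟩
    intro u hu v hv hne hnadj
    simp only [Set.mem_insert_iff, Set.mem_singleton_iff] at hu hv
    rcases hu with rfl | rfl <;> rcases hv with rfl | rfl
    · exact absurd rfl hne
    · exact absurd hadj hnadj
    · exact absurd hadj.symm hnadj
    · exact absurd rfl hne
  apply le_antisymm
  · exact csSup_le ⟨2, h2mem⟩ hub
  · exact le_csSup ⟨2, fun k hk => hub k hk⟩ h2mem
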